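/- Suppose f is continuous on S, f attains a global minimum at some point x* lying in the support of ρ_in, and the initial positions x_0^1, …, x_0^N are i.i.d. with law ρ_in. Let f_∞ := lim_{n→∞} f(p_n) (which exists since f(p_n) is monotone decreasing and bounded below by min f). Then the essential infimum over the sample space of f_∞ equals the global minimum: ess inf_{ω ∈ Ω} f_∞(ω) = min_{x ∈ S} f(x). Equivalently, f_∞ ≥ min f almost surely, and for every ε > 0 the event {f_∞ < min f + ε} has positive probability. -/

import Mathlib

open MeasureTheory ProbabilityTheory Filter Topology

noncomputable section

/-- `Euc d` is the `d`-dimensional Euclidean space `ℝ^d`. -/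
abbrev Euc (d : ℕ) := EuclideanSpace ℝ (Fin d)

/-- Entrywise (Hadamard) product on `ℝ^d`. -/
def hadamard {d : ℕ} (u v : Euc d) : Euc d := WithLp.toLp 2 (fun k => u k * v k)

/-- The anisotropic DCBO update map `F₁(x,y,η) = x + γ¹(y−x) + γ²(y−x)⊙η`. -/
def F1 {d : ℕ} (γ1 γ2 : ℝ) (x y η : Euc d) : Euc d :=
  x + γ1 • (y - x) + γ2 • hadamard (y - x) η

/-- The isotropic DCBO update map `F₂(x,y,η) = x + γ̄¹(y−x) + γ̄²‖y−x‖η/√d`. -/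
def F2 {d : ℕ} (γ1 γ2 : ℝ) (x y η : Euc d) : Euc d :=
  x + γ1 • (y - x) + ((γ2 * ‖y - x‖) / Real.sqrt d) • η

/-- The standard Gaussian measure `N_d(0, I_d)` on `ℝ^d`. -/
def stdGaussian (d : ℕ) : Measure (Euc d) :=
  (Measure.pi fun _ : Fin d => gaussianReal 0 1).map (EuclideanSpace.equiv (Fin d) ℝ).symm

/-- Suppose `f` is continuous on `S` and attains its global minimum at a
point `x*` in the support of `ρ_in`, and the initial positions are i.i.d. with law
`ρ_in`.  Then, for `f_∞ := lim_n f(p_n)`, the essential infimum of `f_∞` over the sample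
space equals the global minimum: `ess inf_ω f_∞(ω) = min f = f(x*)`. -/
theorem dcbo_essinf_limit_eq_min
    {Ω : Type*} [MeasurableSpace Ω] (P : Measure Ω) [IsProbabilityMeasure P]
    {d N : ℕ} (hd : 1 ≤ d) (hN : 1 ≤ N)
    (f : Euc d → EReal) (hf : Measurable f)
    (S : Set (Euc d)) (hS : S = {y | f y < ⊤}) (hSne : S.Nonempty) (hScl : IsClosed S)
    (hfc : ContinuousOn f S)
    (γ1 γ2 γb1 γb2 : ℝ)
    (hγ1 : γ1 ∈ Set.Ioo (0:ℝ) 1) (hγ2 : 0 ≤ γ2)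
    (hγb1 : γb1 ∈ Set.Ioo (0:ℝ) 1) (hγb2 : 0 ≤ γb2)
    (choice : Fin N → Bool)
    (η : ℕ → Fin N → Ω → Euc d)
    (hηmeas : ∀ n i, Measurable (η n i))
    (hηdist : ∀ n i, Measure.map (η n i) P = stdGaussian d)
    (hηindep : iIndepFun (fun (q : ℕ × Fin N) ω => η q.1 q.2 ω) P)
    -- the initial positions are i.i.d. with law `ρ_in`, whose support lies in `S`
    (ρin : Measure (Euc d)) [IsProbabilityMeasure ρin] (hρS : ρin Sᶜ = 0)
    (x : ℕ → Fin N → Ω → Euc d)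
    (hx0meas : ∀ i, Measurable (x 0 i))
    (hx0dist : ∀ i, Measure.map (x 0 i) P = ρin)
    (hx0indep : iIndepFun (fun (i : Fin N) ω => x 0 i ω) P)
    (hindep0 : Indep (⨆ i : Fin N, MeasurableSpace.comap (x 0 i) inferInstance)
        (⨆ (n : ℕ) (i : Fin N), MeasurableSpace.comap (η n i) inferInstance) P)
    (p : ℕ → Ω → Euc d) (ι : ℕ → Ω → Fin N)
    (hp : ∀ n ω, p n ω = x n (ι n ω) ω)
    (hmin : ∀ n ω j, f (x n (ι n ω) ω) ≤ f (x n j ω))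
    (htie : ∀ n ω j, f (x n j ω) = f (x n (ι n ω) ω) → ι n ω ≤ j)
    (hrec : ∀ n i ω, x (n + 1) i ω =
      if choice i then F1 γ1 γ2 (x n i ω) (p n ω) (η n i ω)
      else F2 γb1 γb2 (x n i ω) (p n ω) (η n i ω))
    -- `x*` is a global minimizer of `f` lying in the support of `ρ_in`
    (xstar : Euc d) (hxstarmin : ∀ y, f xstar ≤ f y)
    (hxstarsupp : ∀ U : Set (Euc d), IsOpen U → xstar ∈ U → 0 < ρin U)
    -- `f_∞ := lim_n f(p_n)`
    (fLim : Ω → EReal)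
    (hfLim : ∀ ω, Tendsto (fun n => f (p n ω)) atTop (nhds (fLim ω))) :
    essInf fLim P = f xstar := by
  -- Fixed points of the update maps
  have hfix1 : ∀ (a e : Euc d), F1 γ1 γ2 a a e = a := by
    intro a e
    have h0 : hadamard (0 : Euc d) e = 0 := by
      ext k; simp [hadamard]
    simp [F1, sub_self, h0]
  have hfix2 : ∀ (a e : Euc d), F2 γb1 γb2 a a e = a := by
    intro a e
    simp [F2]
  -- the leader stays put: x (n+1) (ι n ω) ω = p n ω
  have hleader : ∀ n ω, x (n + 1) (ι n ω) ω = p n ω := by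
    intro n ω
    have hx : x n (ι n ω) ω = p n ω := (hp n ω).symm
    rw [hrec n (ι n ω) ω, hx]
    by_cases hc : choice (ι n ω) <;> simp [hc, hfix1, hfix2]
  -- f(p n) is nonincreasing in n, for each ω
  have hmono : ∀ ω, Antitone (fun n => f (p n ω)) := by
    intro ω
    apply antitone_nat_of_succ_le
    intro n
    have h1 : f (p (n + 1) ω) ≤ f (x (n + 1) (ι n ω) ω) := by
      rw [hp (n + 1) ω]; exact hmin (n + 1) ω (ι n ω)
    rw [hleader n ω] at h1
    exact h1
  -- f xstar ≤ fLim ω everywhere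
  have hlow : ∀ ω, f xstar ≤ fLim ω := fun ω =>
    ge_of_tendsto (hfLim ω) (Eventually.of_forall fun n => hxstarmin _)
  -- fLim ω ≤ f (x 0 j ω) for every j
  have hupp : ∀ ω (j : Fin N), fLim ω ≤ f (x 0 j ω) := by
    intro ω j
    have h1 : ∀ n, f (p n ω) ≤ f (p 0 ω) := fun n => hmono ω (Nat.zero_le n)
    have h2 : f (p 0 ω) ≤ f (x 0 j ω) := by rw [hp 0 ω]; exact hmin 0 ω j
    exact le_of_tendsto (hfLim ω) (Eventually.of_forall fun n => (h1 n).trans h2)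
  -- First direction: f xstar ≤ essInf
  have hge : f xstar ≤ essInf fLim P :=
    le_essInf_of_ae_le _ (Eventually.of_forall hlow)
  refine le_antisymm ?_ hge
  -- Second direction, by contradiction
  by_contra hlt
  push_neg at hlt
  obtain ⟨c, hc1, hc2⟩ := exists_between hlt
  -- xstar ∈ S
  have hxstarS : xstar ∈ S := by
    obtain ⟨y, hy⟩ := hSne
    rw [hS]
    exact lt_of_le_of_lt (hxstarmin y) (by rw [hS] at hy; exact hy)
  -- continuity gives an open V ∋ xstar with f < c on V ∩ S
  have hcont : ContinuousWithinAt f S xstar := hfc xstar hxstarS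
  have hIio : f ⁻¹' Set.Iio c ∈ nhdsWithin xstar S :=
    hcont (Iio_mem_nhds hc1)
  rw [mem_nhdsWithin] at hIio
  obtain ⟨V, hVopen, hxV, hVS⟩ := hIio
  -- the event A
  set i0 : Fin N := ⟨0, hN⟩
  set A : Set Ω := (x 0 i0) ⁻¹' (V ∩ S) with hA
  have hVSmeas : MeasurableSet (V ∩ S) := hVopen.measurableSet.inter hScl.measurableSet
  have hPA : P A = ρin (V ∩ S) := by
    rw [hA, ← Measure.map_apply (hx0meas i0) hVSmeas, hx0dist i0]
  have hρVS : 0 < ρin (V ∩ S) := by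
    have h1 : 0 < ρin V := hxstarsupp V hVopen hxV
    have h2 : ρin V ≤ ρin (V ∩ S) + ρin Sᶜ := by
      refine le_trans (measure_mono ?_) (measure_union_le _ _)
      intro y hy
      by_cases hyS : y ∈ S
      · exact Or.inl ⟨hy, hyS⟩
      · exact Or.inr hyS
    rw [hρS, add_zero] at h2
    exact lt_of_lt_of_le h1 h2
  -- on A, fLim < c
  have hAsub : A ⊆ {ω | fLim ω < c} := by
    intro ω hω
    exact lt_of_le_of_lt (hupp ω i0) (hVS hω)
  -- but c < essInf implies a.e. c < fLim
  have hae : ∀ᵐ ω ∂P, c < fLim ω := ae_lt_of_lt_essInf hc2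
  have h0 : P {ω | ¬ c < fLim ω} = 0 := by
    rw [ae_iff] at hae
    exact hae
  have hA0 : P A = 0 := by
    refine measure_mono_null ?_ h0
    intro ω hω
    exact not_lt_of_gt (hAsub hω)
  rw [hPA] at hA0
  exact absurd hA0 (ne_of_gt hρVS)
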